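/- Let p : ℂⁿ → ℂ be a polynomial and F : ℂⁿ → ℂ an entire function such that the product p·F is of exponential type R (i.e., for each N there is C_N with |p(λ)F(λ)| ≤ C_N (1+‖λ‖)^{-N} e^{R‖Re λ‖}). Then F itself is of exponential type R. -/

import Mathlib

/-- The real part of a point of `ℂⁿ`, as a point of `ℝⁿ`. -/
noncomputable def rePart (n : ℕ) (l : EuclideanSpace ℂ (Fin n)) :
    EuclideanSpace ℝ (Fin n) :=
  WithLp.toLp 2 (fun i => (l i).re)

/-- A function on `ℂⁿ` is of exponential type `R` if for every `N` there is `C_N > 0` with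
`|f(λ)| ≤ C_N (1+‖λ‖)^{-N} e^{R ‖Re λ‖}` for all `λ`. -/
def ExpTypeC (n : ℕ) (R : ℝ) (f : EuclideanSpace ℂ (Fin n) → ℂ) : Prop :=
  ∀ N : ℕ, ∃ C > (0 : ℝ), ∀ l : EuclideanSpace ℂ (Fin n),
    ‖f l‖ ≤ C * (1 + ‖l‖) ^ (-(N : ℝ)) * Real.exp (R * ‖rePart n l‖)


open MeasureTheory in
lemma exists_good_radius (m : ℕ) (s : Multiset ℝ) (hs : Multiset.card s ≤ m) :
    ∃ r, r ∈ Set.Icc (1:ℝ) 2 ∧ ∀ t ∈ s, 1/(2*(m+1)) ≤ |r - t| := by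
  set δ : ℝ := 1/(2*(m+1)) with hδ
  have hδpos : 0 < δ := by positivity
  have hcard : s.toFinset.card ≤ m := le_trans (Multiset.toFinset_card_le s) hs
  have hvol : volume (⋃ t ∈ s.toFinset, Set.Icc (t - δ) (t + δ)) < volume (Set.Icc (1:ℝ) 2) := by
    refine lt_of_le_of_lt (measure_biUnion_finset_le _ _) ?_
    have h1 : ∀ t ∈ s.toFinset, volume (Set.Icc (t - δ) (t + δ)) = ENNReal.ofReal (2 * δ) := by
      intro t _
      rw [Real.volume_Icc]
      ring_nf
    have h2 : (0:ℝ) < (m:ℝ)+1 := by positivity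
    rw [Finset.sum_congr rfl h1, Finset.sum_const, Real.volume_Icc,
      show ((2:ℝ) - 1) = 1 by norm_num, nsmul_eq_mul]
    calc (s.toFinset.card : ENNReal) * ENNReal.ofReal (2*δ)
        ≤ (m : ENNReal) * ENNReal.ofReal (2*δ) := by
          gcongr <;> exact_mod_cast hcard
      _ = ENNReal.ofReal ((m:ℝ) * (2*δ)) := by
          rw [ENNReal.ofReal_mul (by positivity : (0:ℝ) ≤ (m:ℝ)),
            ENNReal.ofReal_mul (by norm_num : (0:ℝ) ≤ 2), ENNReal.ofReal_natCast,
            ENNReal.ofReal_ofNat]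
      _ < ENNReal.ofReal 1 := by
          rw [ENNReal.ofReal_lt_ofReal_iff_of_nonneg (by positivity), hδ,
            show (m:ℝ)*(2*(1/(2*((m:ℝ)+1)))) = m/(m+1) by field_simp,
            div_lt_one h2]
          linarith
  have hns : ¬ (Set.Icc (1:ℝ) 2 ⊆ ⋃ t ∈ s.toFinset, Set.Icc (t - δ) (t + δ)) := by
    intro hsub
    exact absurd (measure_mono hsub) (not_le.mpr hvol)
  rw [Set.not_subset] at hns
  obtain ⟨r, hr, hrU⟩ := hns
  refine ⟨r, hr, fun t ht => ?_⟩
  have : r ∉ Set.Icc (t - δ) (t + δ) := by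
    intro hmem
    exact hrU (Set.mem_biUnion (Multiset.mem_toFinset.mpr ht) hmem)
  rw [Set.mem_Icc, not_and_or, not_le, not_le] at this
  rcases this with h | h
  · rw [abs_sub_comm, abs_of_pos (by linarith)]; linarith
  · rw [abs_of_pos (by linarith)]; linarith
lemma multiset_norm_prod (s : Multiset ℂ) : ‖s.prod‖ = (s.map (fun w => ‖w‖)).prod := by
  induction s using Multiset.induction_on with
  | empty => simp
  | cons a s ih => simp [Multiset.prod_cons, norm_mul, ih]

lemma multiset_prod_lower (δ : ℝ) (hδ : 0 ≤ δ) (s : Multiset ℝ) (h : ∀ x ∈ s, δ ≤ x) :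
    δ ^ Multiset.card s ≤ s.prod := by
  induction s using Multiset.induction_on with
  | empty => simp
  | cons a s ih =>
    rw [Multiset.card_cons, Multiset.prod_cons, pow_succ, mul_comm (δ ^ _) δ]
    have ha : δ ≤ a := h a (Multiset.mem_cons_self a s)
    have hs : δ ^ Multiset.card s ≤ s.prod := ih (fun x hx => h x (Multiset.mem_cons_of_mem hx))
    exact mul_le_mul ha hs (pow_nonneg hδ _) (le_trans hδ ha)

open Polynomial in
lemma one_var_bound (m : ℕ) (q : Polynomial ℂ) (hq0 : q ≠ 0) (hqd : q.natDegree = m)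
    (g : ℂ → ℂ) (hg : Differentiable ℂ g) (M : ℝ)
    (hM : ∀ z : ℂ, ‖z‖ ≤ 2 → ‖q.eval z * g z‖ ≤ M) :
    ‖g 0‖ ≤ M / (‖q.leadingCoeff‖ * (1/(2*((m:ℝ)+1)))^m) := by
  set δ : ℝ := 1/(2*((m:ℝ)+1)) with hδ
  have hδpos : 0 < δ := by positivity
  have ha : q.leadingCoeff ≠ 0 := leadingCoeff_ne_zero.mpr hq0
  have hapos : 0 < ‖q.leadingCoeff‖ := norm_pos_iff.mpr ha
  have hsplits : q.Splits := IsAlgClosed.splits q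
  have hcard : Multiset.card q.roots = m := by
    rw [← hqd]; exact (Polynomial.splits_iff_card_roots).mp hsplits
  obtain ⟨r, hrIcc, hr⟩ := exists_good_radius m (q.roots.map (fun w : ℂ => ‖w‖))
    (by rw [Multiset.card_map, hcard])
  obtain ⟨hr1, hr2⟩ := hrIcc
  have hrpos : 0 < r := by linarith
  -- lower bound for |q| on the sphere of radius r
  have hlow : ∀ z : ℂ, ‖z‖ = r → ‖q.leadingCoeff‖ * δ^m ≤ ‖q.eval z‖ := by
    intro z hz
    have hfact := Polynomial.Splits.eq_prod_roots hsplits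
    have : q.eval z = q.leadingCoeff * ((q.roots.map fun t => z - t).prod) := by
      conv_lhs => rw [hfact]
      rw [eval_mul, eval_C, eval_multiset_prod]
      simp [Multiset.map_map]
    rw [this, norm_mul]
    rw [multiset_norm_prod, Multiset.map_map]
    refine mul_le_mul_of_nonneg_left ?_ (norm_nonneg _)
    have : m = Multiset.card (q.roots.map fun t => ‖z - t‖) := by
      rw [Multiset.card_map, hcard]
    rw [this]
    refine multiset_prod_lower δ (le_of_lt hδpos) _ ?_
    intro x hx
    obtain ⟨t, ht, rfl⟩ := Multiset.mem_map.mp hx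
    have h1 : δ ≤ |r - ‖t‖| :=
      hr _ (Multiset.mem_map.mpr ⟨t, ht, rfl⟩)
    calc δ ≤ |r - ‖t‖| := h1
      _ = |‖z‖ - ‖t‖| := by rw [hz]
      _ ≤ ‖z - t‖ := abs_norm_sub_norm_le z t
  have hqa : 0 < ‖q.leadingCoeff‖ * δ^m := by positivity
  -- maximum modulus principle on the ball of radius r
  have hbound : ∀ z ∈ frontier (Metric.ball (0:ℂ) r), ‖g z‖ ≤ M / (‖q.leadingCoeff‖ * δ^m) := by
    intro z hz
    rw [frontier_ball (0:ℂ) (ne_of_gt hrpos), Metric.mem_sphere, dist_zero_right] at hz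
    have hz2 : ‖z‖ ≤ 2 := by rw [hz]; exact hr2
    have h1 := hM z hz2
    have h2 := hlow z hz
    rw [le_div_iff₀ hqa]
    calc ‖g z‖ * (‖q.leadingCoeff‖ * δ^m) ≤ ‖g z‖ * ‖q.eval z‖ :=
          mul_le_mul_of_nonneg_left h2 (norm_nonneg _)
      _ = ‖q.eval z * g z‖ := by rw [norm_mul, mul_comm]
      _ ≤ M := h1
  have h0mem : (0:ℂ) ∈ closure (Metric.ball (0:ℂ) r) := by
    rw [closure_ball (0:ℂ) (ne_of_gt hrpos)]
    exact Metric.mem_closedBall_self (le_of_lt hrpos)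
  exact Complex.norm_le_of_forall_mem_frontier_norm_le Metric.isBounded_ball
    hg.diffContOnCl hbound h0mem

open Polynomial in
lemma coeff_prod_varying {ι : Type*} (s : Finset ι) (f : ι → Polynomial ℂ) (d : ι → ℕ)
    (h : ∀ i ∈ s, (f i).natDegree ≤ d i) :
    (∏ i ∈ s, f i).coeff (∑ i ∈ s, d i) = ∏ i ∈ s, (f i).coeff (d i) := by
  induction s using Finset.cons_induction with
  | empty => simp
  | cons a s ha ih =>
    rw [Finset.prod_cons, Finset.sum_cons,
      Polynomial.coeff_mul_add_eq_of_natDegree_le (h a (Finset.mem_cons_self a s))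
        (le_trans (Polynomial.natDegree_prod_le _ _)
          (Finset.sum_le_sum fun i hi => h i (Finset.mem_cons_of_mem hi))),
      ih (fun i hi => h i (Finset.mem_cons_of_mem hi)), Finset.prod_cons]

open Polynomial MvPolynomial in
lemma exists_dir (n : ℕ) (p : MvPolynomial (Fin n) ℂ) (hp : p ≠ 0) :
    ∃ e : Fin n → ℂ,
      MvPolynomial.eval e (MvPolynomial.homogeneousComponent p.totalDegree p) ≠ 0 := by
  by_contra hcon
  push_neg at hcon
  have hzero : MvPolynomial.homogeneousComponent p.totalDegree p = 0 :=
    MvPolynomial.funext (fun x => by simp [hcon x])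
  obtain ⟨d, hd, hdeg⟩ := Finset.exists_mem_eq_sup p.support
    (MvPolynomial.support_nonempty.mpr hp) (fun d => d.sum fun _ k => k)
  have hc : MvPolynomial.coeff d (MvPolynomial.homogeneousComponent p.totalDegree p)
      = MvPolynomial.coeff d p := by
    rw [MvPolynomial.coeff_homogeneousComponent, if_pos]
    have hdeg' : p.totalDegree = d.sum fun _ k => k := hdeg
    rw [hdeg']
    rfl
  rw [hzero] at hc
  exact (MvPolynomial.mem_support_iff.mp hd) (by simpa using hc.symm)

open Polynomial MvPolynomial in
lemma lineQ (n : ℕ) (p : MvPolynomial (Fin n) ℂ) (e : Fin n → ℂ) (lam : Fin n → ℂ) :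
    ∃ Q : Polynomial ℂ,
      (∀ z : ℂ, Q.eval z = MvPolynomial.eval (fun i => lam i + z * e i) p) ∧
      Q.natDegree ≤ p.totalDegree ∧
      Q.coeff p.totalDegree
        = MvPolynomial.eval e (MvPolynomial.homogeneousComponent p.totalDegree p) := by
  classical
  set m := p.totalDegree with hm
  set b : Fin n → Polynomial ℂ := fun i => Polynomial.C (lam i) + Polynomial.C (e i) * Polynomial.X
    with hb
  have hbdeg : ∀ i, (b i).natDegree ≤ 1 := by
    intro i
    refine (Polynomial.natDegree_add_le _ _).trans (max_le (by simp) ?_)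
    exact (Polynomial.natDegree_C_mul_le _ _).trans (by simp)
  have hbcoeff : ∀ i, (b i).coeff 1 = e i := by
    intro i
    simp [hb, Polynomial.coeff_C]
  refine ⟨MvPolynomial.eval₂ Polynomial.C b p, ?_, ?_, ?_⟩
  · intro z
    have hcomp := MvPolynomial.eval₂_comp_left (Polynomial.evalRingHom z) Polynomial.C b p
    have h1 : (Polynomial.evalRingHom z).comp Polynomial.C = RingHom.id ℂ := by
      ext a; simp
    rw [show Polynomial.eval z (MvPolynomial.eval₂ Polynomial.C b p)
        = (Polynomial.evalRingHom z) (MvPolynomial.eval₂ Polynomial.C b p) from rfl,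
      hcomp, h1, MvPolynomial.eval₂_id]
    have hfun : (⇑(Polynomial.evalRingHom z) ∘ b) = fun i => lam i + z * e i := by
      funext i
      simp [hb]
      ring
    rw [hfun]
  · rw [MvPolynomial.eval₂_eq' Polynomial.C b p]
    refine Polynomial.natDegree_sum_le_of_forall_le _ _ ?_
    intro d hd
    refine (Polynomial.natDegree_mul_le).trans ?_
    have h1 : (Polynomial.C (MvPolynomial.coeff d p)).natDegree = 0 := Polynomial.natDegree_C _
    rw [h1, zero_add]
    refine (Polynomial.natDegree_prod_le _ _).trans ?_
    calc ∑ i, ((b i) ^ d i).natDegree ≤ ∑ i, d i := by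
          refine Finset.sum_le_sum fun i _ => ?_
          exact (Polynomial.natDegree_pow_le).trans (by
            calc d i * (b i).natDegree ≤ d i * 1 :=
                  Nat.mul_le_mul_left _ (hbdeg i)
              _ = d i := Nat.mul_one _)
      _ = d.sum fun _ k => k := by
          rw [Finsupp.sum_fintype]
          intro i; rfl
      _ ≤ m := MvPolynomial.le_totalDegree hd
  · rw [MvPolynomial.eval₂_eq' Polynomial.C b p, Polynomial.finset_sum_coeff]
    have hterm : ∀ d ∈ p.support,
        (Polynomial.C (MvPolynomial.coeff d p) * ∏ i, (b i) ^ d i).coeff m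
          = if (d.sum fun _ k => k) = m then
              MvPolynomial.coeff d p * ∏ i, (e i) ^ d i else 0 := by
      intro d hd
      have hsum : (d.sum fun _ k => k) = ∑ i, d i := by
        rw [Finsupp.sum_fintype]; intro i; rfl
      have hpowdeg : ∀ i, ((b i) ^ d i).natDegree ≤ d i := fun i =>
        (Polynomial.natDegree_pow_le).trans
          (by calc d i * (b i).natDegree ≤ d i * 1 := Nat.mul_le_mul_left _ (hbdeg i)
                _ = d i := Nat.mul_one _)
      by_cases hcase : (d.sum fun _ k => k) = m
      · rw [if_pos hcase, Polynomial.coeff_C_mul]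
        congr 1
        rw [← hcase, hsum]
        rw [coeff_prod_varying Finset.univ _ _ (fun i _ => hpowdeg i)]
        refine Finset.prod_congr rfl fun i _ => ?_
        have := Polynomial.coeff_pow_of_natDegree_le (p := b i) (n := 1) (m := d i) (hbdeg i)
        rw [Nat.mul_one] at this
        rw [this, hbcoeff]
      · rw [if_neg hcase, Polynomial.coeff_C_mul]
        have hlt : (∑ i, d i) < m := by
          rw [← hsum]
          exact lt_of_le_of_ne (MvPolynomial.le_totalDegree hd) hcase
        have : (∏ i, (b i) ^ d i).natDegree < m :=
          lt_of_le_of_lt ((Polynomial.natDegree_prod_le _ _).trans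
            (Finset.sum_le_sum fun i _ => hpowdeg i)) hlt
        rw [Polynomial.coeff_eq_zero_of_natDegree_lt this, mul_zero]
    rw [Finset.sum_congr rfl hterm, Finset.sum_ite, Finset.sum_const_zero, add_zero]
    rw [MvPolynomial.homogeneousComponent_apply, map_sum]
    refine Finset.sum_congr ?_ fun d hd => ?_
    · ext d
      simp only [Finset.mem_filter]
      constructor
      · rintro ⟨h1, h2⟩; exact ⟨h1, h2⟩
      · rintro ⟨h1, h2⟩; exact ⟨h1, h2⟩
    · rw [MvPolynomial.eval_monomial]
      congr 1
      rw [Finsupp.prod_fintype]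
      intro i; rfl

lemma rePart_add (n : ℕ) (x y : EuclideanSpace ℂ (Fin n)) :
    rePart n (x + y) = rePart n x + rePart n y := by
  ext i
  simp [rePart, PiLp.add_apply]

lemma rePart_norm_le (n : ℕ) (x : EuclideanSpace ℂ (Fin n)) : ‖rePart n x‖ ≤ ‖x‖ := by
  rw [EuclideanSpace.norm_eq, EuclideanSpace.norm_eq]
  apply Real.sqrt_le_sqrt
  apply Finset.sum_le_sum
  intro i _
  rw [show ‖rePart n x i‖ = |(x i).re| by simp [rePart, Real.norm_eq_abs]]
  exact pow_le_pow_left₀ (abs_nonneg _) (Complex.abs_re_le_norm _) 2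


/-- If `p` is a (nonzero) polynomial and `F` is entire with `p·F` of exponential type `R`,
then `F` is of exponential type `R`. -/
theorem stmt0 (n : ℕ) (R : ℝ) (hR : 0 < R)
    (p : MvPolynomial (Fin n) ℂ) (hp : p ≠ 0)
    (F : EuclideanSpace ℂ (Fin n) → ℂ) (hF : Differentiable ℂ F)
    (h : ExpTypeC n R fun l => MvPolynomial.eval (fun i => l i) p * F l) :
    ExpTypeC n R F := by
  classical
  obtain ⟨e, he⟩ := exists_dir n p hp
  set m := p.totalDegree with hm
  set a := MvPolynomial.eval e (MvPolynomial.homogeneousComponent m p) with hadef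
  have hapos : 0 < ‖a‖ := norm_pos_iff.mpr he
  set E : EuclideanSpace ℂ (Fin n) := WithLp.toLp 2 (fun i => e i : Fin n → ℂ) with hE
  set δ : ℝ := 1/(2*((m:ℝ)+1)) with hδ
  have hδpos : 0 < δ := by positivity
  intro N
  obtain ⟨C, hC, hCb⟩ := h N
  set c1 : ℝ := 1 + 2*‖E‖ with hc1
  have hc1pos : 0 < c1 := by positivity
  refine ⟨(C * c1^N * Real.exp (2*R*‖E‖)) / (‖a‖ * δ^m),
    div_pos (by positivity) (mul_pos hapos (by positivity)), ?_⟩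
  intro l
  set g : ℂ → ℂ := fun z => F (l + z • E) with hg
  have hgdiff : Differentiable ℂ g :=
    hF.comp ((differentiable_const l).add (differentiable_id.smul_const E))
  obtain ⟨Q, hQeval, hQdeg, hQcoeff⟩ := lineQ n p e (fun i => l i)
  have hQm : Q.coeff m = a := hQcoeff
  have hQne : Q ≠ 0 := fun h0 => he (by rw [← hQm, h0, Polynomial.coeff_zero])
  have hQnd : Q.natDegree = m :=
    le_antisymm hQdeg (Polynomial.le_natDegree_of_ne_zero (by rw [hQm]; exact he))
  have hQlc : Q.leadingCoeff = a := by
    rw [Polynomial.leadingCoeff, hQnd, hQm]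
  set M : ℝ := C * (c1^N * (1+‖l‖)^(-(N:ℝ))) *
    (Real.exp (R*‖rePart n l‖) * Real.exp (2*R*‖E‖)) with hM
  have hMb : ∀ z : ℂ, ‖z‖ ≤ 2 → ‖Q.eval z * g z‖ ≤ M := by
    intro z hz2
    set μ : EuclideanSpace ℂ (Fin n) := l + z • E with hμ
    have hμi : (fun i => (l : Fin n → ℂ) i + z * e i) = fun i => μ i := by
      funext i
      simp [hμ, hE, PiLp.add_apply, PiLp.smul_apply, smul_eq_mul]
    have hQz : Q.eval z * g z = MvPolynomial.eval (fun i => μ i) p * F μ := by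
      rw [hQeval z, hμi]
    have hsE : ‖z • E‖ ≤ 2*‖E‖ := by
      rw [norm_smul]
      exact mul_le_mul_of_nonneg_right hz2 (norm_nonneg _)
    have hlμ : 1 + ‖l‖ ≤ c1 * (1 + ‖μ‖) := by
      have h1 : ‖l‖ ≤ ‖μ‖ + 2*‖E‖ := by
        calc ‖l‖ = ‖μ - z • E‖ := by rw [hμ]; congr 1; abel
          _ ≤ ‖μ‖ + ‖z • E‖ := norm_sub_le _ _
          _ ≤ ‖μ‖ + 2*‖E‖ := by linarith
      have h2 : (0:ℝ) ≤ ‖μ‖ := norm_nonneg _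
      have h3 : (0:ℝ) ≤ ‖E‖ := norm_nonneg _
      rw [hc1]
      nlinarith
    have hrpow : (1+‖μ‖)^(-(N:ℝ)) ≤ c1^N * (1+‖l‖)^(-(N:ℝ)) := by
      have hμ0 : (0:ℝ) < 1 + ‖μ‖ := by positivity
      have hl0 : (0:ℝ) < 1 + ‖l‖ := by positivity
      rw [Real.rpow_neg (le_of_lt hμ0), Real.rpow_neg (le_of_lt hl0),
        Real.rpow_natCast, Real.rpow_natCast]
      rw [inv_le_iff_one_le_mul₀ (by positivity)]
      have key : (1+‖l‖)^N ≤ c1^N * (1+‖μ‖)^N := by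
        rw [← mul_pow]
        exact pow_le_pow_left₀ (by positivity) hlμ N
      calc (1:ℝ) = ((1+‖l‖)^N) * ((1+‖l‖)^N)⁻¹ := by
            rw [mul_inv_cancel₀ (by positivity)]
        _ ≤ (c1^N * (1+‖μ‖)^N) * ((1+‖l‖)^N)⁻¹ := by
            exact mul_le_mul_of_nonneg_right key (by positivity)
        _ = c1^N * ((1+‖l‖)^N)⁻¹ * (1+‖μ‖)^N := by ring
    have hrexp : Real.exp (R*‖rePart n μ‖)
        ≤ Real.exp (R*‖rePart n l‖) * Real.exp (2*R*‖E‖) := by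
      rw [← Real.exp_add]
      apply Real.exp_le_exp.mpr
      have h1 : ‖rePart n μ‖ ≤ ‖rePart n l‖ + 2*‖E‖ := by
        calc ‖rePart n μ‖ = ‖rePart n l + rePart n (z • E)‖ := by
              rw [hμ, rePart_add]
          _ ≤ ‖rePart n l‖ + ‖rePart n (z • E)‖ := norm_add_le _ _
          _ ≤ ‖rePart n l‖ + ‖z • E‖ := by
              have := rePart_norm_le n (z • E); linarith
          _ ≤ ‖rePart n l‖ + 2*‖E‖ := by linarith
      nlinarith
    calc ‖Q.eval z * g z‖
        ≤ C * (1+‖μ‖)^(-(N:ℝ)) * Real.exp (R*‖rePart n μ‖) := by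
          rw [hQz]; exact hCb μ
      _ ≤ C * (c1^N * (1+‖l‖)^(-(N:ℝ))) *
          (Real.exp (R*‖rePart n l‖) * Real.exp (2*R*‖E‖)) := by
          have h1 : (0:ℝ) ≤ (1+‖μ‖)^(-(N:ℝ)) := Real.rpow_nonneg (by positivity) _
          have h2 : (0:ℝ) ≤ C := le_of_lt hC
          exact mul_le_mul (mul_le_mul_of_nonneg_left hrpow h2) hrexp
            (Real.exp_nonneg _) (by positivity)
  have hone := one_var_bound m Q hQne hQnd g hgdiff M hMb
  have hg0 : g 0 = F l := by
    rw [hg]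
    simp
  rw [hg0, hQlc] at hone
  calc ‖F l‖ ≤ M / (‖a‖ * δ^m) := by rw [← hδ] at hone; exact hone
    _ = (C * c1^N * Real.exp (2*R*‖E‖)) / (‖a‖ * δ^m) * (1+‖l‖)^(-(N:ℝ)) *
        Real.exp (R*‖rePart n l‖) := by
        rw [hM, div_eq_mul_inv, div_eq_mul_inv]
        ring
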